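/- Let t : ℕ → ℝ with t_n ≥ 0 for all n, t not identically zero, with Σ_{j=0}^∞ t_j = 1 (t summable with sum 1), and let n_0 be the least index with t_{n_0} > 0. For n ≥ n_0 set ξ^{(n)}_j = t_j / (Σ_{i=0}^n t_i) ∈ stdSimplex ℝ (Fin (n+1)), let ξ^{(n)} be arbitrary in the simplex for n < n_0, define f_n(x)_j = x_j + x_{n+1}·ξ^{(n)}_j, and let Δ be the inverse limit, with extreme points e_n ∈ Δ (n ∈ ℕ) characterized by f_{∞,m}(e_n) = e_n^{(m)} for m ≥ n, and with e_∞ ∈ Δ the unique element satisfying f_{∞,n}(e_∞) = ξ^{(n)} for all n ≥ n_0. Then: (a) e_∞ is the infinite convex combination Σ_{j=0}^∞ t_j e_j, in the sense that for each m, the m-th coordinate of e_∞ equals the convergent series Σ_{j=0}^∞ t_j · f_{∞,m}(e_j) in Fin (m+1) → ℝ; and (b) if at least two of the t_j are nonzero, then e_∞ is not an extreme point of Δ, the set of extreme points of Δ equals exactly {e_n : n ∈ ℕ}, and this set is not closed (its closure also contains e_∞), so Δ is not a Bauer simplex. -/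

import Mathlib

set_option maxHeartbeats 4000000 in
/-- Stationary case with `Σ t_j = 1`: in the inverse limit `Δ` corresponding to
`ξ^{(n)}_j = t_j / Σ_{i≤n} t_i`, the distinguished element `e_∞` equals the infinite convex
combination `Σ_j t_j e_j` (coordinatewise convergent series); if at least two `t_j` are
nonzero, then `e_∞` is not extreme, the set of extreme points of `Δ` is exactly
`{e_n : n ∈ ℕ}`, and this set is not closed (its closure contains `e_∞`), so `Δ` is not a
Bauer simplex. -/
theorem stmt_13 (t : ℕ → ℝ) (ht : ∀ n, 0 ≤ t n) (hsum : HasSum t 1) (n₀ : ℕ)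
    (hn₀ : 0 < t n₀) (hn₀min : ∀ i, i < n₀ → t i = 0)
    (ξ : ∀ n : ℕ, Fin (n + 1) → ℝ)
    (hξsimplex : ∀ n, ξ n ∈ stdSimplex ℝ (Fin (n + 1)))
    (hξ : ∀ n, n₀ ≤ n → ∀ j : Fin (n + 1),
      ξ n j = t (j : ℕ) / ∑ i ∈ Finset.range (n + 1), t i)
    (Δ : Set (∀ n, Fin (n + 1) → ℝ))
    (hΔ : Δ = {x | (∀ n, x n ∈ stdSimplex ℝ (Fin (n + 1))) ∧
      ∀ n, ∀ j : Fin (n + 1),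
        x (n + 1) j.castSucc + x (n + 1) (Fin.last (n + 1)) * ξ n j = x n j})
    (e : ℕ → ∀ m : ℕ, Fin (m + 1) → ℝ)
    (heΔ : ∀ n, e n ∈ Δ)
    (he : ∀ n, ∀ m, n ≤ m → ∀ j : Fin (m + 1), e n m j = if (j : ℕ) = n then 1 else 0)
    (eInf : ∀ m : ℕ, Fin (m + 1) → ℝ)
    (heInfΔ : eInf ∈ Δ)
    (heInf : ∀ n, n₀ ≤ n → eInf n = ξ n) :
    (∀ (m : ℕ) (j : Fin (m + 1)), HasSum (fun k : ℕ => t k * e k m j) (eInf m j)) ∧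
    ((∃ a b : ℕ, a ≠ b ∧ t a ≠ 0 ∧ t b ≠ 0) →
      eInf ∉ Δ.extremePoints ℝ ∧
      Δ.extremePoints ℝ = Set.range e ∧
      eInf ∈ closure (Set.range e) ∧
      ¬ IsClosed (Δ.extremePoints ℝ)) := by
  -- basic facts about partial sums of t
  have hS1 : ∀ m : ℕ, (∑ i ∈ Finset.range m, t i) ≤ 1 :=
    fun m => sum_le_hasSum _ (fun i _ => ht i) hsum
  have hSpos : ∀ m : ℕ, n₀ < m → 0 < ∑ i ∈ Finset.range m, t i := by
    intro m hm
    have h := Finset.single_le_sum (f := t) (fun i _ => ht i) (Finset.mem_range.2 hm)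
    linarith
  have hSn₀ : ∑ i ∈ Finset.range (n₀ + 1), t i = t n₀ := by
    rw [Finset.sum_range_succ,
      Finset.sum_eq_zero (fun i hi => hn₀min i (Finset.mem_range.1 hi))]
    ring
  -- destructure Δ membership
  have hmem : ∀ z, z ∈ Δ → (∀ n, z n ∈ stdSimplex ℝ (Fin (n + 1))) ∧
      ∀ n, ∀ j : Fin (n + 1),
        z (n + 1) j.castSucc + z (n + 1) (Fin.last (n + 1)) * ξ n j = z n j := by
    intro z hz; rw [hΔ] at hz; exact hz
  -- downward uniqueness
  have hdown : ∀ u v : (∀ n, Fin (n + 1) → ℝ),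
      (∀ n, ∀ j : Fin (n + 1),
        u (n + 1) j.castSucc + u (n + 1) (Fin.last (n + 1)) * ξ n j = u n j) →
      (∀ n, ∀ j : Fin (n + 1),
        v (n + 1) j.castSucc + v (n + 1) (Fin.last (n + 1)) * ξ n j = v n j) →
      ∀ N, u N = v N → ∀ m, m ≤ N → u m = v m := by
    intro u v hu hv N hN
    have key : ∀ d m, m + d = N → u m = v m := by
      intro d
      induction d with
      | zero => intro m hm; have : m = N := by omega
                subst this; exact hN
      | succ d ih =>
        intro m hm
        have h2 : u (m + 1) = v (m + 1) := ih (m + 1) (by omega)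
        funext j
        rw [← hu m j, ← hv m j, h2]
    intro m hm; exact key (N - m) m (by omega)
  -- downward preservation of simplex membership
  have hdownsimp : ∀ u : (∀ n, Fin (n + 1) → ℝ),
      (∀ n, ∀ j : Fin (n + 1),
        u (n + 1) j.castSucc + u (n + 1) (Fin.last (n + 1)) * ξ n j = u n j) →
      ∀ N, u N ∈ stdSimplex ℝ (Fin (N + 1)) → ∀ m, m ≤ N →
        u m ∈ stdSimplex ℝ (Fin (m + 1)) := by
    intro u hu N hN
    have step : ∀ m, u (m + 1) ∈ stdSimplex ℝ (Fin (m + 2)) →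
        u m ∈ stdSimplex ℝ (Fin (m + 1)) := by
      intro m hm
      obtain ⟨hnn, hsum1⟩ := hm
      obtain ⟨hξnn, hξsum⟩ := hξsimplex m
      constructor
      · intro j
        rw [← hu m j]
        exact add_nonneg (hnn _) (mul_nonneg (hnn _) (hξnn j))
      · have h1 : ∑ j : Fin (m + 1), u m j
            = ∑ j : Fin (m + 1), (u (m + 1) j.castSucc
              + u (m + 1) (Fin.last (m + 1)) * ξ m j) :=
          Finset.sum_congr rfl (fun j _ => (hu m j).symm)
        have h2 := Fin.sum_univ_castSucc (fun i => u (m + 1) i)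
        rw [hsum1] at h2
        rw [h1, Finset.sum_add_distrib, ← Finset.mul_sum, hξsum]
        linarith
    have key : ∀ d m, m + d = N → u m ∈ stdSimplex ℝ (Fin (m + 1)) := by
      intro d
      induction d with
      | zero => intro m hm; have : m = N := by omega
                subst this; exact hN
      | succ d ih => intro m hm; exact step m (ih (m + 1) (by omega))
    intro m hm; exact key (N - m) m (by omega)
  -- values of e k at levels below k
  have heval : ∀ k m, n₀ ≤ m → m < k → ∀ j : Fin (m + 1),
      e k m j = t (j : ℕ) / ∑ i ∈ Finset.range (m + 1), t i := by
    intro k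
    have key : ∀ d m, n₀ ≤ m → m + 1 + d = k → ∀ j : Fin (m + 1),
        e k m j = t (j : ℕ) / ∑ i ∈ Finset.range (m + 1), t i := by
      intro d
      induction d with
      | zero =>
        intro m hm hmk j
        have hrec := (hmem _ (heΔ k)).2 m j
        rw [he k (m + 1) (by omega) j.castSucc, he k (m + 1) (by omega) (Fin.last (m + 1)),
          hξ m hm j] at hrec
        have hc1 : ((j.castSucc : Fin (m + 2)) : ℕ) ≠ k := by
          simp only [Fin.coe_castSucc]; omega
        have hc2 : ((Fin.last (m + 1) : Fin (m + 2)) : ℕ) = k := by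
          simp only [Fin.val_last]; omega
        rw [if_neg hc1, if_pos hc2] at hrec
        linarith
      | succ d ih =>
        intro m hm hmk j
        have hrec := (hmem _ (heΔ k)).2 m j
        rw [ih (m + 1) (by omega) (by omega) j.castSucc,
          ih (m + 1) (by omega) (by omega) (Fin.last (m + 1)), hξ m hm j] at hrec
        simp only [Fin.coe_castSucc, Fin.val_last] at hrec
        have h1 : (0:ℝ) < ∑ i ∈ Finset.range (m + 1), t i := hSpos _ (by omega)
        have h3 : ∑ i ∈ Finset.range (m + 1 + 1), t i
            = (∑ i ∈ Finset.range (m + 1), t i) + t (m + 1) := Finset.sum_range_succ _ _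
        have h4 : (0:ℝ) < (∑ i ∈ Finset.range (m + 1), t i) + t (m + 1) := by
          have := ht (m + 1); linarith
        rw [← hrec, h3]
        field_simp
    intro m hm hmk j
    exact key (k - m - 1) m hm (by omega) j
  have hEinf_eval : ∀ m, n₀ ≤ m → ∀ j : Fin (m + 1),
      eInf m j = t (j : ℕ) / ∑ i ∈ Finset.range (m + 1), t i := by
    intro m hm j; rw [heInf m hm, hξ m hm j]
  have hE0 : ∀ k, n₀ ≤ k → e k n₀ = eInf n₀ := by
    intro k hk
    rcases eq_or_lt_of_le hk with heq | hlt
    · subst heq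
      funext j
      rw [he n₀ n₀ le_rfl j, hEinf_eval n₀ le_rfl j, hSn₀]
      by_cases hj : (j : ℕ) = n₀
      · rw [if_pos hj, hj, div_self (ne_of_gt hn₀)]
      · rw [if_neg hj, hn₀min (j : ℕ) (by omega), zero_div]

    · funext j
      rw [heval k n₀ le_rfl hlt j, hEinf_eval n₀ le_rfl j]
  have hC : ∀ k m, n₀ ≤ k → m < k → e k m = eInf m := by
    intro k m hk hm
    rcases le_or_gt n₀ m with h | h
    · funext j
      rw [heval k m h hm j, hEinf_eval m h j]
    · exact hdown (e k) eInf (hmem _ (heΔ k)).2 (hmem _ heInfΔ).2 n₀ (hE0 k hk) m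
        (le_of_lt h)
  -- Part (a)
  have parta : ∀ (m : ℕ) (j : Fin (m + 1)),
      HasSum (fun k : ℕ => t k * e k m j) (eInf m j) := by
    intro m j
    rcases lt_or_ge m n₀ with hm | hm
    · have hfun : (fun k => t k * e k m j) = fun k => t k * eInf m j := by
        funext k
        rcases lt_or_ge k n₀ with hk | hk
        · rw [hn₀min k hk]; ring
        · rw [hC k m hk (by omega)]
      rw [hfun]
      simpa using hsum.mul_right (eInf m j)
    · have hpos : (0:ℝ) < ∑ i ∈ Finset.range (m + 1), t i := hSpos _ (by omega)
      have htail : HasSum (fun k => t (k + (m + 1)))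
          (1 - ∑ i ∈ Finset.range (m + 1), t i) := by
        apply (hasSum_nat_add_iff (m + 1)).2
        have : (1 - ∑ i ∈ Finset.range (m + 1), t i) + ∑ i ∈ Finset.range (m + 1), t i
            = 1 := by ring
        rw [this]; exact hsum
      have hshift : (fun k => t (k + (m + 1))
            * (t (j : ℕ) / ∑ i ∈ Finset.range (m + 1), t i))
          = fun k => t (k + (m + 1)) * e (k + (m + 1)) m j := by
        funext k
        rw [hC (k + (m + 1)) m (by omega) (by omega), hEinf_eval m hm j]
      have hts : HasSum (fun k => t (k + (m + 1)) * e (k + (m + 1)) m j)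
          ((1 - ∑ i ∈ Finset.range (m + 1), t i)
            * (t (j : ℕ) / ∑ i ∈ Finset.range (m + 1), t i)) := by
        rw [← hshift]; exact htail.mul_right _
      have hfinal := (hasSum_nat_add_iff (f := fun k => t k * e k m j) (m + 1)).1 hts
      have hsum_fin : ∑ i ∈ Finset.range (m + 1), t i * e i m j = t (j : ℕ) := by
        rw [Finset.sum_congr rfl
          (fun i hi => by rw [he i m (Nat.lt_succ_iff.1 (Finset.mem_range.1 hi)) j])]
        rw [Finset.sum_eq_single (j : ℕ)]
        · simp
        · intro i _ hne; rw [if_neg (fun h => hne h.symm)]; ring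
        · intro h; exact absurd (Finset.mem_range.2 j.isLt) h
      rw [hsum_fin] at hfinal
      have hval : eInf m j = (1 - ∑ i ∈ Finset.range (m + 1), t i)
            * (t (j : ℕ) / ∑ i ∈ Finset.range (m + 1), t i) + t (j : ℕ) := by
        rw [hEinf_eval m hm j]
        field_simp
        ring
      rw [hval]; exact hfinal
  refine ⟨parta, ?_⟩
  rintro ⟨A', B', hab, hA', hB'⟩
  have hBex : ∃ B, n₀ < B ∧ 0 < t B := by
    have h1 : ∀ c, t c ≠ 0 → n₀ ≤ c := fun c hc =>
      le_of_not_gt (fun h => hc (hn₀min c h))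
    rcases eq_or_ne A' n₀ with rfl | hA'n
    · exact ⟨B', lt_of_le_of_ne (h1 B' hB') hab,
        lt_of_le_of_ne (ht B') (Ne.symm hB')⟩
    · exact ⟨A', lt_of_le_of_ne (h1 A' hA') (Ne.symm hA'n),
        lt_of_le_of_ne (ht A') (Ne.symm hA')⟩
  obtain ⟨B, hBgt, hBpos⟩ := hBex
  have hSBmono : ∀ m m' : ℕ, m ≤ m' →
      (∑ i ∈ Finset.range m, t i) ≤ ∑ i ∈ Finset.range m', t i := by
    intro m m' hmm
    exact Finset.sum_le_sum_of_subset_of_nonneg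
      (Finset.range_subset_range.2 hmm) (fun i _ _ => ht i)
  have hSB : ∀ m, B < m → t n₀ < ∑ i ∈ Finset.range m, t i := by
    intro m hm
    have h1 : t n₀ + t B ≤ ∑ i ∈ Finset.range (B + 1), t i := by
      have h2 := Finset.sum_le_sum_of_subset_of_nonneg
        (show ({n₀, B} : Finset ℕ) ⊆ Finset.range (B + 1) by
          intro i hi
          simp only [Finset.mem_insert, Finset.mem_singleton] at hi
          rcases hi with rfl | rfl <;> simp [Finset.mem_range] <;> omega)
        (fun i _ _ => ht i)
      rwa [Finset.sum_pair (by omega : n₀ ≠ B)] at h2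
    have h3 := hSBmono (B + 1) m hm
    linarith
  have heInf_ne : ∀ n, e n ≠ eInf := by
    intro n hne
    set M := max n B with hM
    have hMB : B < M + 1 := by omega
    have hMn : n ≤ M := le_max_left _ _
    have hMn₀ : n₀ ≤ M := by omega
    have hpos : (0:ℝ) < ∑ i ∈ Finset.range (M + 1), t i := hSpos _ (by omega)
    have hval := congr_fun (congr_fun hne M) ⟨n₀, by omega⟩
    rw [he n M hMn ⟨n₀, by omega⟩, hEinf_eval M hMn₀ ⟨n₀, by omega⟩] at hval
    simp only at hval
    have hSM := hSB (M + 1) hMB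
    by_cases h : n₀ = n
    · rw [if_pos h] at hval
      have : t n₀ / ∑ i ∈ Finset.range (M + 1), t i < 1 := (div_lt_one hpos).2 hSM
      rw [← hval] at this
      linarith
    · rw [if_neg h] at hval
      have : 0 < t n₀ / ∑ i ∈ Finset.range (M + 1), t i := div_pos hn₀ hpos
      rw [← hval] at this
      linarith
  -- each e n is an extreme point
  have hext_e : ∀ n, e n ∈ Δ.extremePoints ℝ := by
    intro n
    rw [mem_extremePoints]
    refine ⟨heΔ n, ?_⟩
    intro x₁ h₁ x₂ h₂ hseg
    obtain ⟨u, v, hu, hv, huv, heq⟩ := hseg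
    obtain ⟨h₁s, h₁r⟩ := hmem _ h₁
    obtain ⟨h₂s, h₂r⟩ := hmem _ h₂
    have hco : ∀ m (j : Fin (m + 1)), u * x₁ m j + v * x₂ m j = e n m j := by
      intro m j
      have h := congr_fun (congr_fun heq m) j
      simpa using h
    have hzero : ∀ m, n ≤ m → ∀ j : Fin (m + 1), (j : ℕ) ≠ n →
        x₁ m j = 0 ∧ x₂ m j = 0 := by
      intro m hm j hj
      have h := hco m j
      rw [he n m hm j, if_neg hj] at h
      have g1 := (h₁s m).1 j
      have g2 := (h₂s m).1 j
      constructor <;> nlinarith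
    have key : ∀ z : (∀ n, Fin (n + 1) → ℝ), (∀ p, z p ∈ stdSimplex ℝ (Fin (p + 1))) →
        (∀ m, n ≤ m → ∀ j : Fin (m + 1), (j : ℕ) ≠ n → z m j = 0) →
        ∀ m, n ≤ m → z m = e n m := by
      intro z hzs hz0 m hm
      funext j
      rw [he n m hm j]
      by_cases hj : (j : ℕ) = n
      · rw [if_pos hj]
        have hs := (hzs m).2
        have hone : ∑ i : Fin (m + 1), z m i = z m j :=
          Finset.sum_eq_single j
            (fun i _ hne => hz0 m hm i (fun hc => hne (Fin.ext (by omega))))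
            (by intro h; exact absurd (Finset.mem_univ j) h)
        rw [hone] at hs; exact hs
      · rw [if_neg hj]; exact hz0 m hm j hj
    have hup1 : ∀ m, n ≤ m → x₁ m = e n m :=
      key x₁ h₁s (fun m hm j hj => (hzero m hm j hj).1)
    have hup2 : ∀ m, n ≤ m → x₂ m = e n m :=
      key x₂ h₂s (fun m hm j hj => (hzero m hm j hj).2)
    have hdn1 := hdown x₁ (e n) h₁r (hmem _ (heΔ n)).2 n (hup1 n le_rfl)
    have hdn2 := hdown x₂ (e n) h₂r (hmem _ (heΔ n)).2 n (hup2 n le_rfl)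
    constructor
    · funext m
      rcases le_or_gt m n with h | h
      · exact hdn1 m h
      · exact hup1 m h.le
    · funext m
      rcases le_or_gt m n with h | h
      · exact hdn2 m h
      · exact hup2 m h.le
  -- hard inclusion : extreme points are in the range of e
  have hsubset : Δ.extremePoints ℝ ⊆ Set.range e := by
    intro x hx
    rw [mem_extremePoints] at hx
    obtain ⟨hxΔ, hxext⟩ := hx
    obtain ⟨hxs, hxr⟩ := hmem _ hxΔ
    set X : ℕ → ℕ → ℝ := fun p j => if h : j < p + 1 then x p ⟨j, h⟩ else 0 with hXdef
    have hXeq : ∀ p (j : Fin (p + 1)), X p (j : ℕ) = x p j := by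
      intro p j
      simp only [hXdef]
      rw [dif_pos j.isLt]
    have hXeq' : ∀ p j (h : j < p + 1), X p j = x p ⟨j, h⟩ := by
      intro p j h; simp only [hXdef]; rw [dif_pos h]
    have hXnn : ∀ p j, 0 ≤ X p j := by
      intro p j
      simp only [hXdef]
      split
      · exact (hxs p).1 _
      · exact le_rfl
    have hcast : ∀ q (j : ℕ) (h : j < q + 1),
        (Fin.castSucc (⟨j, h⟩ : Fin (q + 1))) = (⟨j, by omega⟩ : Fin (q + 2)) := by
      intro q j h; rfl
    have hlastval : ∀ q, (Fin.last (q + 1)) = (⟨q + 1, by omega⟩ : Fin (q + 2)) := by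
      intro q; rfl
    have hXrec : ∀ q j, j ≤ q → n₀ ≤ q →
        X q j = X (q + 1) j + X (q + 1) (q + 1)
          * (t j / ∑ i ∈ Finset.range (q + 1), t i) := by
      intro q j hjq hq
      have hr := hxr q ⟨j, by omega⟩
      rw [hξ q hq ⟨j, by omega⟩] at hr
      rw [hcast q j (by omega), hlastval q] at hr
      rw [hXeq' q j (by omega), hXeq' (q + 1) j (by omega),
        hXeq' (q + 1) (q + 1) (by omega)]
      simp only at hr ⊢
      linarith [hr]
    have hXanti1 : ∀ q j, j ≤ q → X (q + 1) j ≤ X q j := by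
      intro q j hjq
      have hr := hxr q ⟨j, by omega⟩
      rw [hcast q j (by omega), hlastval q] at hr
      have hξnn := (hξsimplex q).1 ⟨j, by omega⟩
      have hlnn := (hxs (q + 1)).1 (⟨q + 1, by omega⟩ : Fin (q + 2))
      rw [hXeq' q j (by omega), hXeq' (q + 1) j (by omega)]
      nlinarith [hr]
    have hXanti : ∀ j p p', j ≤ p → p ≤ p' → X p' j ≤ X p j := by
      intro j p p' hjp h
      induction p', h using Nat.le_induction with
      | base => exact le_rfl
      | succ p' hpp ih => exact le_trans (hXanti1 p' j (by omega)) ih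
    set a : ℕ → ℝ := fun j => ⨅ p : ℕ, X (j + p) j with hadef
    have hbdd : ∀ j, BddBelow (Set.range (fun p => X (j + p) j)) := by
      intro j
      refine ⟨0, ?_⟩
      rintro y ⟨p, rfl⟩
      exact hXnn _ _
    have ha_le : ∀ j p, j ≤ p → a j ≤ X p j := by
      intro j p hjp
      have h := ciInf_le (hbdd j) (p - j)
      simpa [show j + (p - j) = p from by omega] using h
    have ha_nn : ∀ j, 0 ≤ a j := fun j => le_ciInf (fun p => hXnn _ _)
    have ha_tendsto : ∀ j, Filter.Tendsto (fun p => X p j) Filter.atTop (nhds (a j)) := by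
      intro j
      have h1 : Filter.Tendsto (fun p => X (j + p) j) Filter.atTop (nhds (a j)) :=
        tendsto_atTop_ciInf
          (fun p q hpq => hXanti j (j + p) (j + q) (by omega) (by omega)) (hbdd j)
      have h2 : (fun p => X (j + p) j) = fun p => X (p + j) j := by
        funext p; rw [Nat.add_comm]
      rw [h2] at h1
      exact (Filter.tendsto_add_atTop_iff_nat j).1 h1
    have hsum_level : ∀ p, ∑ i ∈ Finset.range (p + 1), X p i = 1 := by
      intro p
      have h := (hxs p).2
      rw [← Fin.sum_univ_eq_sum_range (fun i => X p i) (p + 1)]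
      rw [← h]
      exact Finset.sum_congr rfl (fun i _ => hXeq p i)
    have hparts : ∀ n, ∑ i ∈ Finset.range n, a i ≤ 1 := by
      intro n
      cases n with
      | zero => simp
      | succ n =>
        calc ∑ i ∈ Finset.range (n + 1), a i
            ≤ ∑ i ∈ Finset.range (n + 1), X n i :=
              Finset.sum_le_sum (fun i hi =>
                ha_le i n (by have := Finset.mem_range.1 hi; omega))
          _ = 1 := hsum_level n
    have hsumm_a : Summable a := summable_of_sum_range_le ha_nn hparts
    set A := ∑' j, a j with hAdef
    have hA : HasSum a A := hsumm_a.hasSum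
    have hA1 : A ≤ 1 := hsumm_a.tsum_le_of_sum_range_le hparts
    have hAm_le : ∀ m, ∑ j ∈ Finset.range (m + 1), a j ≤ A :=
      fun m => Summable.sum_le_tsum _ (fun i _ => ha_nn i) hsumm_a
    have hT : ∀ m, n₀ ≤ m → ∀ j, j ≤ m → ∀ p, m ≤ p →
        X m j = X p j + t j * ∑ q ∈ Finset.Ico m p,
          X (q + 1) (q + 1) / ∑ i ∈ Finset.range (q + 1), t i := by
      intro m hm j hj p hp
      induction p, hp using Nat.le_induction with
      | base => simp
      | succ p hp ih =>
        rw [Finset.sum_Ico_succ_top hp]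
        have hr := hXrec p j (by omega) (by omega)
        rw [ih, hr]
        ring
    set l : ℕ → ℝ := fun m => (X m n₀ - a n₀) / t n₀ with hldef
    have hR : ∀ m, n₀ ≤ m → ∀ j, j ≤ m → X m j = a j + t j * l m := by
      intro m hm j hj
      have hLtends : Filter.Tendsto (fun p => ∑ q ∈ Finset.Ico m p,
          X (q + 1) (q + 1) / ∑ i ∈ Finset.range (q + 1), t i)
          Filter.atTop (nhds (l m)) := by
        have h1 : Filter.Tendsto (fun p => (X m n₀ - X p n₀) / t n₀)
            Filter.atTop (nhds ((X m n₀ - a n₀) / t n₀)) :=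
          (tendsto_const_nhds.sub (ha_tendsto n₀)).div_const _
        apply h1.congr'
        filter_upwards [Filter.eventually_ge_atTop m] with p hp
        have hTp := hT m hm n₀ hm p hp
        rw [hTp]
        field_simp
        ring
      have h2 : Filter.Tendsto (fun p => X p j + t j * ∑ q ∈ Finset.Ico m p,
          X (q + 1) (q + 1) / ∑ i ∈ Finset.range (q + 1), t i)
          Filter.atTop (nhds (a j + t j * l m)) :=
        (ha_tendsto j).add (hLtends.const_mul _)
      have h3 : Filter.Tendsto (fun p => X p j + t j * ∑ q ∈ Finset.Ico m p,
          X (q + 1) (q + 1) / ∑ i ∈ Finset.range (q + 1), t i)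
          Filter.atTop (nhds (X m j)) := by
        apply Filter.Tendsto.congr' _ (tendsto_const_nhds (x := X m j))
        filter_upwards [Filter.eventually_ge_atTop m] with p hp
        exact hT m hm j hj p hp
      exact tendsto_nhds_unique h3 h2
    have hl_nn : ∀ m, n₀ ≤ m → 0 ≤ l m := by
      intro m hm
      apply div_nonneg _ hn₀.le
      have := ha_le n₀ m hm
      linarith
    have hSl : ∀ m, n₀ ≤ m → (∑ i ∈ Finset.range (m + 1), t i) * l m
        = 1 - ∑ j ∈ Finset.range (m + 1), a j := by
      intro m hm
      have h1 := hsum_level m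
      have h2 : ∑ i ∈ Finset.range (m + 1), X m i
          = ∑ i ∈ Finset.range (m + 1), (a i + t i * l m) :=
        Finset.sum_congr rfl (fun i hi =>
          hR m hm i (by have := Finset.mem_range.1 hi; omega))
      rw [h2, Finset.sum_add_distrib, ← Finset.sum_mul] at h1
      linarith
    set bco : ℕ → ℝ := fun k => a k + (1 - A) * t k with hbdef
    have hb_nn : ∀ k, 0 ≤ bco k := fun k =>
      add_nonneg (ha_nn k) (mul_nonneg (by linarith) (ht k))
    have hbsum : HasSum bco 1 := by
      have h := hA.add (hsum.mul_left (1 - A))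
      convert h using 1
      ring
    have hKex : ∃ K, 0 < bco K := by
      by_contra h
      push_neg at h
      have hzero : bco = fun _ => (0:ℝ) :=
        funext (fun k => le_antisymm (h k) (hb_nn k))
      rw [hzero] at hbsum
      exact one_ne_zero (hbsum.unique hasSum_zero)
    obtain ⟨K, hKpos⟩ := hKex
    have hbK1 : bco K ≤ 1 := le_hasSum hbsum K (fun i _ => hb_nn i)
    have htK1 : t K ≤ 1 := le_hasSum hsum K (fun i _ => ht i)
    rcases eq_or_lt_of_le hbK1 with hb1 | hblt
    · -- bco K = 1 : x = e K
      have hbk0 : ∀ k, k ≠ K → bco k = 0 := by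
        intro k hk
        have hpair : bco k + bco K ≤ 1 := by
          have h := sum_le_hasSum ({k, K} : Finset ℕ) (fun i _ => hb_nn i) hbsum
          rwa [Finset.sum_pair hk] at h
        have := hb_nn k
        linarith
      have hhigh : ∀ m, n₀ ≤ m → K ≤ m → x m = e K m := by
        intro m hm hKm
        have hbsum_fin : ∑ j ∈ Finset.range (m + 1), bco j = 1 := by
          rw [Finset.sum_eq_single K (fun i _ hne => hbk0 i hne)
            (fun h => absurd (Finset.mem_range.2 (by omega)) h)]
          linarith
        have hAs : ∑ j ∈ Finset.range (m + 1), a j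
            = 1 - (1 - A) * ∑ i ∈ Finset.range (m + 1), t i := by
          have h2 : ∑ j ∈ Finset.range (m + 1), bco j
              = ∑ j ∈ Finset.range (m + 1), a j
                + (1 - A) * ∑ i ∈ Finset.range (m + 1), t i := by
            simp only [hbdef]
            rw [Finset.sum_add_distrib, Finset.mul_sum]
          rw [hbsum_fin] at h2
          linarith
        have hS0 : (0:ℝ) < ∑ i ∈ Finset.range (m + 1), t i := hSpos _ (by omega)
        have hlm : l m = 1 - A := by
          have h1 := hSl m hm
          rw [hAs] at h1
          have h2 : (∑ i ∈ Finset.range (m + 1), t i) * l m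
              = (∑ i ∈ Finset.range (m + 1), t i) * (1 - A) := by linarith
          exact mul_left_cancel₀ (ne_of_gt hS0) h2
        funext j
        rw [he K m hKm j, ← hXeq m j, hR m hm (j : ℕ) (by omega), hlm]
        by_cases hj : (j : ℕ) = K
        · rw [if_pos hj]
          have : bco K = a K + (1 - A) * t K := rfl
          rw [hj]
          linarith
        · rw [if_neg hj]
          have h0 := hbk0 (j : ℕ) hj
          have : bco (j:ℕ) = a (j:ℕ) + (1 - A) * t (j:ℕ) := rfl
          linarith
      have hM := hhigh (max n₀ K) (le_max_left _ _) (le_max_right _ _)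
      have hlow := hdown x (e K) hxr (hmem _ (heΔ K)).2 (max n₀ K) hM
      refine ⟨K, ?_⟩
      funext m
      rcases le_or_gt m (max n₀ K) with h | h
      · exact (hlow m h).symm
      · exact (hhigh m (by omega) (by omega)).symm
    · -- 0 < bco K < 1
      set y : ∀ n, Fin (n + 1) → ℝ :=
        fun m j => (x m j - bco K * e K m j) / (1 - bco K) with hydef
      have hd : (0:ℝ) < 1 - bco K := by linarith
      have hyrec : ∀ n, ∀ j : Fin (n + 1),
          y (n + 1) j.castSucc + y (n + 1) (Fin.last (n + 1)) * ξ n j = y n j := by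
        intro n j
        have h1 := hxr n j
        have h2 := (hmem _ (heΔ K)).2 n j
        simp only [hydef]
        field_simp
        linear_combination h1 - bco K * h2
      have hynn_high : ∀ m, n₀ ≤ m → ∀ j : Fin (m + 1),
          bco K * e K m j ≤ x m j := by
        intro m hm j
        have hS0 : (0:ℝ) < ∑ i ∈ Finset.range (m + 1), t i := hSpos _ (by omega)
        have hSle1 := hS1 (m + 1)
        rcases le_or_gt K m with hKm | hmK
        · rw [he K m hKm j]
          by_cases hj : (j : ℕ) = K
          · rw [if_pos hj, mul_one]
            have hAm := hAm_le m
            have hl : 1 - A ≤ l m := by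
              have h2 := hSl m hm
              nlinarith [hl_nn m hm]
            rw [← hXeq m j, hR m hm (j : ℕ) (by omega), hj]
            have hbKval : bco K = a K + (1 - A) * t K := rfl
            nlinarith [ht K]
          · rw [if_neg hj, mul_zero]
            exact (hxs m).1 j
        · rw [heval K m hm hmK j]
          have key : bco K ≤ (∑ i ∈ Finset.range (m + 1), t i) * l m := by
            rw [hSl m hm]
            have h1 : ∑ j ∈ Finset.range (m + 1), a j + a K ≤ A := by
              have heq2 : ∑ j ∈ Finset.range (m + 1), a j + a K
                  = ∑ j ∈ insert K (Finset.range (m + 1)), a j := by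
                rw [Finset.sum_insert (by simp only [Finset.mem_range]; omega)]
                ring
              rw [heq2]
              exact Summable.sum_le_tsum _ (fun i _ => ha_nn i) hsumm_a
            have hbKval : bco K = a K + (1 - A) * t K := rfl
            nlinarith [ht K, ha_nn K]
          rw [← hXeq m j, hR m hm (j : ℕ) (by omega)]
          have h2 : bco K * (t (j:ℕ) / ∑ i ∈ Finset.range (m + 1), t i)
              ≤ t (j:ℕ) * l m := by
            rw [mul_div_assoc', div_le_iff₀ hS0]
            nlinarith [key, ht (j:ℕ)]
          linarith [ha_nn (j:ℕ)]
      have hysum_high : ∀ m, n₀ ≤ m → y m ∈ stdSimplex ℝ (Fin (m + 1)) := by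
        intro m hm
        constructor
        · intro j
          simp only [hydef]
          apply div_nonneg _ hd.le
          linarith [hynn_high m hm j]
        · simp only [hydef]
          rw [← Finset.sum_div]
          rw [Finset.sum_sub_distrib, ← Finset.mul_sum, (hxs m).2,
            ((hmem _ (heΔ K)).1 m).2]
          field_simp
      have hyΔ : y ∈ Δ := by
        rw [hΔ]
        refine ⟨?_, hyrec⟩
        intro n
        rcases le_or_gt n₀ n with h | h
        · exact hysum_high n h
        · exact hdownsimp y hyrec n₀ (hysum_high n₀ le_rfl) n h.le
      have hseg : x ∈ openSegment ℝ (e K) y := by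
        refine ⟨bco K, 1 - bco K, hKpos, hd, by ring, ?_⟩
        funext m j
        simp only [Pi.add_apply, Pi.smul_apply, smul_eq_mul, hydef]
        field_simp
        ring
      obtain ⟨h1, h2⟩ := hxext (e K) (heΔ K) y hyΔ hseg
      exact ⟨K, h1⟩
  have hEq : Δ.extremePoints ℝ = Set.range e :=
    Set.Subset.antisymm hsubset (by rintro _ ⟨n, rfl⟩; exact hext_e n)
  have hnotin : eInf ∉ Δ.extremePoints ℝ := by
    rw [hEq]; rintro ⟨n, hn⟩; exact heInf_ne n hn
  have hclos : eInf ∈ closure (Set.range e) := by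
    apply mem_closure_of_tendsto (f := e) (b := Filter.atTop)
    · rw [tendsto_pi_nhds]
      intro m
      apply Filter.Tendsto.congr' _ (tendsto_const_nhds (x := eInf m))
      filter_upwards [Filter.eventually_ge_atTop (max n₀ (m + 1))] with k hk
      exact (hC k m (by omega) (by omega)).symm
    · filter_upwards with k using ⟨k, rfl⟩
  refine ⟨hnotin, hEq, hclos, ?_⟩
  intro hcl
  rw [hEq] at hcl
  rw [hcl.closure_eq] at hclos
  obtain ⟨n, hn⟩ := hclos
  exact heInf_ne n hn
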